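/- arXiv:2303.15717 — 2 statements merged into one kernel-verified Lean document; each statement's English description precedes it below -/
import Mathlib

section
/- Let X be a complex Banach space and L(X) the Banach algebra of bounded linear operators on X. Let M = [[A, B], [C, D]] ∈ M₂(L(X)) and suppose A and D have strongly Drazin inverses. If A^D B C A^D = 0, A^D B D = 0, A^π B C = 0 and A^π B D = 0, where A^D is the Drazin inverse of A and A^π = I − A·A^D, then M has a Hirano inverse in M₂(L(X)). -/
/-- `a` has a Hirano inverse: there exists `z` with `az = za`, `z = zaz`,
and `a^2 - az` nilpotent. -/
def HasHiranoInverse {R : Type*} [Ring R] (a : R) : Prop :=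
  ∃ z : R, a * z = z * a ∧ z = z * a * z ∧ IsNilpotent (a ^ 2 - a * z)

/-- `a` has a strongly Drazin inverse: there exists `z` with `az = za`, `z = zaz`,
and `a - az` nilpotent. -/
def HasStronglyDrazinInverse {R : Type*} [Ring R] (a : R) : Prop :=
  ∃ z : R, a * z = z * a ∧ z = z * a * z ∧ IsNilpotent (a - a * z)


lemma pow_sub_dvd {R : Type*} [CommRing R] (x : R) : ∀ k : ℕ, 1 ≤ k → ∃ g, x^k - x = (x^2 - x) * g := by
  intro k hk
  induction k with
  | zero => omega
  | succ k ih =>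
    rcases Nat.eq_or_lt_of_le hk with h | h
    · exact ⟨0, by rw [← h]; ring⟩
    · obtain ⟨g, hg⟩ := ih (by omega)
      exact ⟨x * g + 1, by rw [pow_succ]; linear_combination x * hg⟩

lemma idem_approx {R : Type*} [CommRing R] (b : R) (hν : IsNilpotent (b - b^2)) :
    ∃ e s, e * e = e ∧ IsNilpotent (b - e) ∧ b * s = e ∧ e * s = s := by
  obtain ⟨k0, hk0⟩ := hν
  set k := k0 + 1 with hkdef
  have hk : (b - b^2) ^ k = 0 := by rw [hkdef, pow_succ, hk0, zero_mul]
  obtain ⟨g1, hg1⟩ := pow_sub_dvd b k (by omega)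
  obtain ⟨g2, hg2⟩ := pow_sub_dvd (1 - b) k (by omega)
  have hξ : b^k + (1-b)^k - 1 = (b - b^2) * (-(g1 + g2)) := by
    have h2 : (1-b)^2 - (1-b) = -(b - b^2) := by ring
    linear_combination hg1 + hg2 + g2 * h2
  have hunit : IsUnit (b^k + (1-b)^k) := by
    have := (IsNilpotent.isUnit_one_add ⟨k, by rw [hξ, mul_pow, hk, zero_mul]⟩ :
      IsUnit (1 + (b^k + (1-b)^k - 1)))
    have he : 1 + (b^k + (1-b)^k - 1) = b^k + (1-b)^k := by ring
    rwa [he] at this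
  obtain ⟨u, hu1, hu2⟩ := isUnit_iff_exists.mp hunit
  have h0 : b^k * (1-b)^k = 0 := by
    rw [← mul_pow]
    have hbb : b * (1-b) = b - b^2 := by ring
    rw [hbb, hk]
  have hidem : (b^k * u) * (b^k * u) = b^k * u := by
    have h1e : 1 - b^k * u = (1-b)^k * u := by linear_combination -hu1
    have hz : (b^k * u) * (1 - b^k * u) = 0 := by
      rw [h1e]
      calc b^k * u * ((1-b)^k * u) = (b^k * (1-b)^k) * (u * u) := by ring
        _ = 0 := by rw [h0, zero_mul]
    linear_combination -hz
  have hbe : b - b^k * u = (b - b^2) * ((b * (-(g1+g2)) + g1) * u) := by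
    have hx : b - b^k * u = (b * (b^k + (1-b)^k) - b^k) * u := by linear_combination -(b * hu1)
    have hbb : b * (b^k + (1-b)^k) - b^k = b * (b^k + (1-b)^k - 1) - (b^k - b) := by ring
    rw [hx, hbb, hξ]; linear_combination (-u)*hg1
  have hnnil : (b - b^k * u)^k = 0 := by rw [hbe, mul_pow, hk, zero_mul]
  obtain ⟨v, hv1, hv2⟩ := isUnit_iff_exists.mp
    (IsNilpotent.isUnit_one_add ⟨k, hnnil⟩ : IsUnit (1 + (b - b^k * u)))
  refine ⟨b^k * u, b^k * u * v, hidem, ⟨k, hnnil⟩, ?_, ?_⟩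
  · have hbev : b * (b^k * u) = (b^k * u) * (1 + (b - b^k * u)) := by linear_combination hidem
    calc b * (b^k * u * v) = (b^k * u) * ((1 + (b - b^k * u)) * v) := by
          rw [← mul_assoc, hbev]; ring
      _ = b^k * u := by rw [hv1, mul_one]
  · rw [← mul_assoc, hidem]

lemma comm_hirano {R : Type*} [CommRing R] (a : R) (h : IsNilpotent (a - a^3)) :
    ∃ z, a*z = z*a ∧ z = z*a*z ∧ IsNilpotent (a^2 - a*z) := by
  have hν : IsNilpotent (a^2 - (a^2)^2) := by
    have hh : a^2 - (a^2)^2 = a * (a - a^3) := by ring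
    rw [hh]; exact (Commute.all _ _).isNilpotent_mul_left h
  obtain ⟨e, s, hidem, hnil, hbs, hes⟩ := idem_approx (a^2) hν
  refine ⟨a * s, mul_comm _ _, ?_, ?_⟩
  · calc a * s = a * (e * s) := by rw [hes]
      _ = a * (a^2 * s * s) := by rw [hbs]
      _ = a * s * a * (a * s) := by ring
  · have hh : a^2 - a * (a * s) = a^2 - e := by rw [← hbs]; ring
    rw [hh]; exact hnil

lemma hirano_of_nilpotent {R : Type*} [Ring R] (M : R) (h : IsNilpotent (M - M^3)) :
    HasHiranoInverse M := by
  let T : Subring R := Subring.closure {M}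
  letI : CommRing T := Subring.closureCommRingOfComm (by rintro x rfl y rfl; rfl)
  set m : T := ⟨M, Subring.subset_closure rfl⟩ with hm
  have hcoe : ∀ t : T, ∀ n : ℕ, ((t ^ n : T) : R) = (t : R) ^ n := fun t n => by
    push_cast; ring
  have hnil : IsNilpotent (m - m^3) := by
    obtain ⟨n, hn⟩ := h
    refine ⟨n, Subtype.ext ?_⟩
    have : ((m - m^3 : T) : R) = M - M^3 := by push_cast; rfl
    calc (((m - m^3)^n : T) : R) = ((m - m^3 : T) : R)^n := hcoe _ n
      _ = (M - M^3)^n := by rw [this]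
      _ = 0 := hn
  obtain ⟨z, hz1, hz2, n, hz3⟩ := comm_hirano m hnil
  refine ⟨z, ?_, ?_, n, ?_⟩
  · have h' := congrArg (Subtype.val) hz1; push_cast at h'; exact h'
  · have h' := congrArg (Subtype.val) hz2; push_cast at h'; exact h'
  · have := congrArg (Subtype.val) hz3
    push_cast at this
    convert this using 2 <;> push_cast <;> ring


lemma uv_pow {R : Type*} [Ring R] (U V : R) (hUU : U*U = 0) (hUV : U*V = 0) :
    ∀ n : ℕ, (U+V)^(n+1) = V^(n+1) + V^n*U := by
  intro n
  induction n with
  | zero => simp [add_comm]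
  | succ n ih =>
    rw [pow_succ, ih, add_mul, mul_add, mul_add, mul_assoc (V^n) U U,
      mul_assoc (V^n) U V, hUU, hUV]
    simp only [mul_zero, add_zero, zero_add]
    rw [← pow_succ]
    abel

lemma pow_lower_tri {L : Type*} [Ring L] (a c d : L) :
    ∀ n : ℕ, ∃ y : L, (!![a,0;c,d] : Matrix (Fin 2) (Fin 2) L)^(n+1) = !![a^(n+1), 0; y, d^(n+1)] := by
  intro n
  induction n with
  | zero => exact ⟨c, by simp⟩
  | succ n ih =>
    obtain ⟨y, hy⟩ := ih
    refine ⟨y * a + d^(n+1) * c, ?_⟩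
    rw [pow_succ, hy, Matrix.mul_fin_two]
    congr 1 <;> simp [pow_succ]

lemma diag_pow {L : Type*} [Ring L] (x : L) :
    ∀ m : ℕ, (!![0,0;0,x] : Matrix (Fin 2) (Fin 2) L)^(m+1) = !![0,0;0,x^(m+1)] := by
  intro m
  induction m with
  | zero => simp
  | succ m ih =>
    rw [pow_succ, ih, Matrix.mul_fin_two]
    congr 1 <;> simp [pow_succ]

lemma nilpotent_lower_tri {L : Type*} [Ring L] (a c d : L) (ha : IsNilpotent a) (hd : IsNilpotent d) :
    IsNilpotent (!![a,0;c,d] : Matrix (Fin 2) (Fin 2) L) := by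
  obtain ⟨p, hp⟩ := ha
  obtain ⟨q, hq⟩ := hd
  have hp' : a^(p+1) = 0 := by rw [pow_succ, hp, zero_mul]
  obtain ⟨y, hy⟩ := pow_lower_tri a c d p
  set U : Matrix (Fin 2) (Fin 2) L := !![0,0;y,0] with hU
  set V : Matrix (Fin 2) (Fin 2) L := !![0,0;0,d^(p+1)] with hV
  have hXpow : (!![a,0;c,d] : Matrix (Fin 2) (Fin 2) L)^(p+1) = U + V := by
    rw [hy, hp', hU, hV]
    ext i j; fin_cases i <;> fin_cases j <;> simp
  have hUU : U*U = 0 := by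
    rw [hU]; ext i j
    fin_cases i <;> fin_cases j <;> simp [Matrix.mul_apply, Fin.sum_univ_two]
  have hUV : U*V = 0 := by
    rw [hU, hV]; ext i j
    fin_cases i <;> fin_cases j <;> simp [Matrix.mul_apply, Fin.sum_univ_two]
  have hVpow : ∀ m : ℕ, V^(m+1) = !![0,0;0,(d^(p+1))^(m+1)] := fun m => diag_pow _ m
  have hdq : (d^(p+1))^(q+1) = 0 := by
    rw [← pow_mul]
    refine pow_eq_zero_of_le ?_ hq
    calc q ≤ q + 1 := by omega
      _ ≤ (p+1)*(q+1) := Nat.le_mul_of_pos_left _ (by omega)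
  refine ⟨(p+1)*((q+1)+1), ?_⟩
  rw [pow_mul, hXpow, uv_pow U V hUU hUV (q+1), hVpow (q+1)]
  have h1 : (d ^ (p + 1)) ^ (q + 1 + 1) = 0 := by rw [pow_succ, hdq, zero_mul]
  have h2 : V ^ (q+1) = 0 := by
    rw [hVpow q, hdq]
    ext i j; fin_cases i <;> fin_cases j <;> simp
  rw [h1, h2, zero_mul, add_zero]
  ext i j; fin_cases i <;> fin_cases j <;> simp

lemma sub_sq_nil {L : Type*} [Ring L] (a z : L) (h1 : a*z = z*a) (h2 : z = z*a*z)
    (h3 : IsNilpotent (a - a*z)) : IsNilpotent (a - a*a) := by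
  have hee : (a*z)*(a*z) = a*z := by
    calc (a*z)*(a*z) = a*(z*a*z) := by noncomm_ring
      _ = a*z := by rw [← h2]
  have hea : (a*z)*a = a*(a*z) := by rw [h1, ← mul_assoc, h1]
  have key : a - a*a = (a - a*z) * (1 - a*z - a) := by
    have expand : (a - a*z) * (1 - a*z - a)
        = a - a*(a*z) - a*a - a*z + (a*z)*(a*z) + (a*z)*a := by noncomm_ring
    rw [expand, hee, hea]; noncomm_ring
  have hcomm : Commute (a - a*z) (1 - a*z - a) := by
    show (a - a*z) * (1 - a*z - a) = (1 - a*z - a) * (a - a*z)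
    have l : (a - a*z) * (1 - a*z - a)
        = a - a*(a*z) - a*a - a*z + (a*z)*(a*z) + (a*z)*a := by noncomm_ring
    have r : (1 - a*z - a) * (a - a*z)
        = a - a*z - (a*z)*a + (a*z)*(a*z) - a*a + a*(a*z) := by noncomm_ring
    rw [l, r, hea]; noncomm_ring
  rw [key]
  exact hcomm.isNilpotent_mul_right h3


section Scalar
variable {L : Type*} [Ring L]

/-- The additive subgroup of elements `d * C * a` with `d ∈ ℤ[D]`, `a ∈ ℤ[A]`. -/
def Gsub (A C D : L) : AddSubgroup L :=
  AddSubgroup.closure {z : L | ∃ d ∈ Subring.closure {D}, ∃ a ∈ Subring.closure {A}, z = d*C*a}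

lemma G_mul_right (A C D : L) : ∀ s ∈ Gsub A C D, ∀ a ∈ Subring.closure {A}, s*a ∈ Gsub A C D := by
  intro s hs a ha
  induction hs using AddSubgroup.closure_induction with
  | mem x hx =>
    obtain ⟨d, hd, a', ha', rfl⟩ := hx
    exact AddSubgroup.subset_closure ⟨d, hd, a'*a, mul_mem ha' ha, by rw [mul_assoc]⟩
  | zero => rw [zero_mul]; exact zero_mem _
  | add x y hx hy ihx ihy => rw [add_mul]; exact add_mem ihx ihy
  | neg x hx ihx => rw [neg_mul]; exact neg_mem ihx

lemma G_mul_left (A C D : L) : ∀ d ∈ Subring.closure {D}, ∀ s ∈ Gsub A C D, d*s ∈ Gsub A C D := by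
  intro d hd s hs
  induction hs using AddSubgroup.closure_induction with
  | mem x hx =>
    obtain ⟨d', hd', a, ha, rfl⟩ := hx
    exact AddSubgroup.subset_closure ⟨d*d', mul_mem hd hd', a, ha, by noncomm_ring⟩
  | zero => rw [mul_zero]; exact zero_mem _
  | add x y hx hy ihx ihy => rw [mul_add]; exact add_mem ihx ihy
  | neg x hx ihx => rw [mul_neg]; exact neg_mem ihx

lemma scalar_key (A B C D AD : L)
    (hBD : B*D = 0) (hBCe : B*C*(A*AD) = 0) (heBC : (A*AD)*(B*C) = B*C)
    (hAe : A*(A*AD) = (A*AD)*A) :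
    ∀ s ∈ Gsub A C D, ∀ t ∈ Gsub A C D, B*s*(B*t) = 0 := by
  -- B * d = n • B for d ∈ ℤ[D]
  have SC1 : ∀ d ∈ Subring.closure {D}, ∃ n : ℤ, B*d = n • B := by
    intro d hd
    induction hd using Subring.closure_induction with
    | mem x hx => exact ⟨0, by rw [Set.mem_singleton_iff.mp hx, hBD]; simp⟩
    | zero => exact ⟨0, by simp⟩
    | one => exact ⟨1, by simp⟩
    | add x y hx hy ihx ihy =>
      obtain ⟨n, hn⟩ := ihx; obtain ⟨m, hm⟩ := ihy
      exact ⟨n + m, by rw [mul_add, hn, hm, add_smul]⟩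
    | neg x hx ihx =>
      obtain ⟨n, hn⟩ := ihx
      exact ⟨-n, by rw [mul_neg, hn, neg_smul]⟩
    | mul x y hx hy ihx ihy =>
      obtain ⟨n, hn⟩ := ihx; obtain ⟨m, hm⟩ := ihy
      exact ⟨n * m, by rw [← mul_assoc, hn, smul_mul_assoc, hm, smul_smul]⟩
  -- elements of ℤ[A] commute with A * AD
  have SC2 : ∀ a ∈ Subring.closure {A}, a*(A*AD) = (A*AD)*a := by
    intro a ha
    induction ha using Subring.closure_induction with
    | mem x hx => rw [Set.mem_singleton_iff.mp hx]; exact hAe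
    | zero => rw [zero_mul, mul_zero]
    | one => rw [one_mul, mul_one]
    | add x y hx hy ihx ihy => rw [add_mul, mul_add, ihx, ihy]
    | neg x hx ihx => rw [neg_mul, mul_neg, ihx]
    | mul x y hx hy ihx ihy => rw [mul_assoc, ihy, ← mul_assoc, ihx, mul_assoc]
  -- B * s = B * C * α for s ∈ G
  have SC3 : ∀ s ∈ Gsub A C D, ∃ α ∈ Subring.closure {A}, B*s = B*C*α := by
    intro s hs
    induction hs using AddSubgroup.closure_induction with
    | mem x hx =>
      obtain ⟨d, hd, a, ha, rfl⟩ := hx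
      obtain ⟨n, hn⟩ := SC1 d hd
      refine ⟨n • a, zsmul_mem ha n, ?_⟩
      rw [← mul_assoc, ← mul_assoc, hn, smul_mul_assoc, smul_mul_assoc, mul_smul_comm, mul_assoc]
    | zero => exact ⟨0, zero_mem _, by simp⟩
    | add x y hx hy ihx ihy =>
      obtain ⟨α, hα, hx'⟩ := ihx; obtain ⟨β, hβ, hy'⟩ := ihy
      exact ⟨α + β, add_mem hα hβ, by rw [mul_add, hx', hy', mul_add]⟩
    | neg x hx ihx =>
      obtain ⟨α, hα, hx'⟩ := ihx
      exact ⟨-α, neg_mem hα, by rw [mul_neg, hx', mul_neg]⟩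
  intro s hs t ht
  obtain ⟨α, hα, hsα⟩ := SC3 s hs
  obtain ⟨β, hβ, htβ⟩ := SC3 t ht
  rw [hsα, htβ]
  calc B*C*α*(B*C*β) = B*C*(α*(B*C))*β := by noncomm_ring
    _ = B*C*(α*((A*AD)*(B*C)))*β := by rw [heBC]
    _ = B*C*((A*AD)*(α*(B*C)))*β := by rw [← mul_assoc α, SC2 α hα]; noncomm_ring
    _ = (B*C*(A*AD))*(α*(B*C))*β := by noncomm_ring
    _ = 0 := by rw [hBCe, zero_mul, zero_mul]
end Scalar

section MatrixPart
variable {L : Type*} [Ring L]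

open Matrix

lemma entries_lemma (A B C D : L) :
    ∀ x ∈ Subring.closure {(!![A,0;C,D] : Matrix (Fin 2) (Fin 2) L)},
      x 0 1 = 0 ∧ x 0 0 ∈ Subring.closure {A} ∧ x 1 1 ∈ Subring.closure {D} ∧
        x 1 0 ∈ Gsub A C D := by
  intro x hx
  induction hx using Subring.closure_induction with
  | mem x hx =>
    rw [Set.mem_singleton_iff.mp hx]
    refine ⟨by simp, by simp; exact Subring.subset_closure rfl,
      by simp; exact Subring.subset_closure rfl, ?_⟩
    simp
    exact AddSubgroup.subset_closure ⟨1, one_mem _, 1, one_mem _, by simp⟩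
  | zero => exact ⟨rfl, zero_mem _, zero_mem _, zero_mem _⟩
  | one =>
    refine ⟨?_, ?_, ?_, ?_⟩
    · simp [Matrix.one_apply]
    · simp [Matrix.one_apply]
    · simp [Matrix.one_apply]
    · simp [Matrix.one_apply]
  | add x y hx hy ihx ihy =>
    obtain ⟨h1, h2, h3, h4⟩ := ihx; obtain ⟨g1, g2, g3, g4⟩ := ihy
    exact ⟨by simp [Matrix.add_apply, h1, g1], by simp [Matrix.add_apply]; exact add_mem h2 g2,
      by simp [Matrix.add_apply]; exact add_mem h3 g3,
      by simp [Matrix.add_apply]; exact add_mem h4 g4⟩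
  | neg x hx ihx =>
    obtain ⟨h1, h2, h3, h4⟩ := ihx
    exact ⟨by simp [Matrix.neg_apply, h1], by simp [Matrix.neg_apply]; exact h2,
      by simp [Matrix.neg_apply]; exact h3,
      by simp [Matrix.neg_apply]; exact h4⟩
  | mul x y hx hy ihx ihy =>
    obtain ⟨h1, h2, h3, h4⟩ := ihx; obtain ⟨g1, g2, g3, g4⟩ := ihy
    have hm : ∀ i j, (x*y) i j = x i 0 * y 0 j + x i 1 * y 1 j := by
      intro i j; rw [Matrix.mul_apply, Fin.sum_univ_two]
    refine ⟨?_, ?_, ?_, ?_⟩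
    · rw [hm, g1, h1, mul_zero, zero_mul, add_zero]
    · rw [hm, h1, zero_mul, add_zero]; exact mul_mem h2 g2
    · rw [hm, g1, mul_zero, zero_add]; exact mul_mem h3 g3
    · rw [hm]
      exact add_mem (G_mul_right A C D _ h4 _ g2) (G_mul_left A C D _ h3 _ g4)

lemma L3lemma (A B C D AD : L)
    (hBD : B*D = 0) (hBCe : B*C*(A*AD) = 0) (heBC : (A*AD)*(B*C) = B*C)
    (hAe : A*(A*AD) = (A*AD)*A) :
    ∀ x ∈ Subring.closure {(!![A,0;C,D] : Matrix (Fin 2) (Fin 2) L)},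
    ∀ y ∈ Subring.closure {(!![A,0;C,D] : Matrix (Fin 2) (Fin 2) L)},
      (!![0,B;0,0] : Matrix (Fin 2) (Fin 2) L) * x * !![0,B;0,0] * y * !![0,B;0,0] = 0 := by
  intro x hx y hy
  obtain ⟨-, -, -, hx10⟩ := entries_lemma A B C D x hx
  obtain ⟨-, -, -, hy10⟩ := entries_lemma A B C D y hy
  have key : B * (x 1 0) * (B * (y 1 0)) = 0 :=
    scalar_key A B C D AD hBD hBCe heBC hAe _ hx10 _ hy10
  have s1 : (!![0,B;0,0] : Matrix (Fin 2) (Fin 2) L) * x = !![B * x 1 0, B * x 1 1; 0, 0] := by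
    ext i j; fin_cases i <;> fin_cases j <;>
      simp [Matrix.mul_apply, Fin.sum_univ_two]
  have s2 : (!![B * x 1 0, B * x 1 1; 0, 0] : Matrix (Fin 2) (Fin 2) L) * !![0,B;0,0]
      = !![0, B * x 1 0 * B; 0, 0] := by
    ext i j; fin_cases i <;> fin_cases j <;>
      simp [Matrix.mul_apply, Fin.sum_univ_two]
  have s3 : (!![0, B * x 1 0 * B; 0, 0] : Matrix (Fin 2) (Fin 2) L) * y
      = !![B * x 1 0 * B * y 1 0, B * x 1 0 * B * y 1 1; 0, 0] := by
    ext i j; fin_cases i <;> fin_cases j <;>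
      simp [Matrix.mul_apply, Fin.sum_univ_two, mul_assoc]
  have s4 : (!![B * x 1 0 * B * y 1 0, B * x 1 0 * B * y 1 1; 0, 0] : Matrix (Fin 2) (Fin 2) L)
      * !![0,B;0,0] = !![0, B * x 1 0 * B * y 1 0 * B; 0, 0] := by
    ext i j; fin_cases i <;> fin_cases j <;>
      simp [Matrix.mul_apply, Fin.sum_univ_two]
  rw [s1, s2, s3, s4]
  have : B * x 1 0 * B * y 1 0 = 0 := by rw [mul_assoc (B * x 1 0) B (y 1 0)]; exact key
  rw [this, zero_mul]
  ext i j; fin_cases i <;> fin_cases j <;> simp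
end MatrixPart

section Words
variable {R : Type*} [Ring R] (E F : R)

def D1sub : AddSubgroup R :=
  AddSubgroup.closure {z | ∃ p ∈ Subring.closure {E}, ∃ q ∈ Subring.closure {E}, z = p*F*q}

def D2sub : AddSubgroup R :=
  AddSubgroup.closure {z | ∃ p ∈ Subring.closure {E}, ∃ q ∈ Subring.closure {E},
    ∃ r ∈ Subring.closure {E}, z = p*F*q*F*r}

variable (hL3 : ∀ x ∈ Subring.closure {E}, ∀ y ∈ Subring.closure {E}, F*x*F*y*F = 0)

section
include hL3

lemma d11 : ∀ a ∈ D1sub E F, ∀ x ∈ Subring.closure {E}, ∀ b ∈ D1sub E F,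
    a*x*b ∈ D2sub E F := by
  intro a ha x hx b hb
  induction ha using AddSubgroup.closure_induction with
  | mem a' ha' =>
    obtain ⟨p, hp, q, hq, rfl⟩ := ha'
    induction hb using AddSubgroup.closure_induction with
    | mem b' hb' =>
      obtain ⟨p', hp', q', hq', rfl⟩ := hb'
      refine AddSubgroup.subset_closure ⟨p, hp, q*x*p', mul_mem (mul_mem hq hx) hp', q', hq', ?_⟩
      noncomm_ring
    | zero => rw [mul_zero]; exact zero_mem _
    | add u v hu hv ihu ihv => rw [mul_add]; exact add_mem ihu ihv
    | neg u hu ihu => rw [mul_neg]; exact neg_mem ihu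
  | zero => rw [zero_mul, zero_mul]; exact zero_mem _
  | add u v hu hv ihu ihv => rw [add_mul, add_mul]; exact add_mem ihu ihv
  | neg u hu ihu => rw [neg_mul, neg_mul]; exact neg_mem ihu

lemma d12 : ∀ a ∈ D1sub E F, ∀ x ∈ Subring.closure {E}, ∀ b ∈ D2sub E F, a*x*b = 0 := by
  intro a ha x hx b hb
  induction ha using AddSubgroup.closure_induction with
  | mem a' ha' =>
    obtain ⟨p, hp, q, hq, rfl⟩ := ha'
    induction hb using AddSubgroup.closure_induction with
    | mem b' hb' =>
      obtain ⟨p', hp', q', hq', r', hr', rfl⟩ := hb'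
      have h0 := hL3 (q*x*p') (mul_mem (mul_mem hq hx) hp') q' hq'
      calc p*F*q*x*(p'*F*q'*F*r') = p*(F*(q*x*p')*F*q'*F)*r' := by noncomm_ring
        _ = 0 := by rw [h0, mul_zero, zero_mul]
    | zero => rw [mul_zero]
    | add u v hu hv ihu ihv => rw [mul_add, ihu, ihv, add_zero]
    | neg u hu ihu => rw [mul_neg, ihu, neg_zero]
  | zero => rw [zero_mul, zero_mul]
  | add u v hu hv ihu ihv => rw [add_mul, add_mul, ihu, ihv, add_zero]
  | neg u hu ihu => rw [neg_mul, neg_mul, ihu, neg_zero]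

lemma d21 : ∀ a ∈ D2sub E F, ∀ x ∈ Subring.closure {E}, ∀ b ∈ D1sub E F, a*x*b = 0 := by
  intro a ha x hx b hb
  induction ha using AddSubgroup.closure_induction with
  | mem a' ha' =>
    obtain ⟨p, hp, q, hq, r, hr, rfl⟩ := ha'
    induction hb using AddSubgroup.closure_induction with
    | mem b' hb' =>
      obtain ⟨p', hp', q', hq', rfl⟩ := hb'
      have h0 := hL3 q hq (r*x*p') (mul_mem (mul_mem hr hx) hp')
      calc p*F*q*F*r*x*(p'*F*q') = p*(F*q*F*(r*x*p')*F)*q' := by noncomm_ring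
        _ = 0 := by rw [h0, mul_zero, zero_mul]
    | zero => rw [mul_zero]
    | add u v hu hv ihu ihv => rw [mul_add, ihu, ihv, add_zero]
    | neg u hu ihu => rw [mul_neg, ihu, neg_zero]
  | zero => rw [zero_mul, zero_mul]
  | add u v hu hv ihu ihv => rw [add_mul, add_mul, ihu, ihv, add_zero]
  | neg u hu ihu => rw [neg_mul, neg_mul, ihu, neg_zero]

lemma d22 : ∀ a ∈ D2sub E F, ∀ x ∈ Subring.closure {E}, ∀ b ∈ D2sub E F, a*x*b = 0 := by
  intro a ha x hx b hb
  induction ha using AddSubgroup.closure_induction with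
  | mem a' ha' =>
    obtain ⟨p, hp, q, hq, r, hr, rfl⟩ := ha'
    induction hb using AddSubgroup.closure_induction with
    | mem b' hb' =>
      obtain ⟨p', hp', q', hq', r', hr', rfl⟩ := hb'
      have h0 := hL3 q hq (r*x*p') (mul_mem (mul_mem hr hx) hp')
      calc p*F*q*F*r*x*(p'*F*q'*F*r') = p*(F*q*F*(r*x*p')*F)*(q'*F*r') := by noncomm_ring
        _ = 0 := by rw [h0, mul_zero, zero_mul]
    | zero => rw [mul_zero]
    | add u v hu hv ihu ihv => rw [mul_add, ihu, ihv, add_zero]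
    | neg u hu ihu => rw [mul_neg, ihu, neg_zero]
  | zero => rw [zero_mul, zero_mul]
  | add u v hu hv ihu ihv => rw [add_mul, add_mul, ihu, ihv, add_zero]
  | neg u hu ihu => rw [neg_mul, neg_mul, ihu, neg_zero]

lemma K2lemma (S : R) (hS : ∃ s1 ∈ D1sub E F, ∃ s2 ∈ D2sub E F, S = s1 + s2) :
    ∀ x ∈ Subring.closure {E}, ∀ y ∈ Subring.closure {E}, S*x*S*y*S = 0 := by
  obtain ⟨s1, hs1, s2, hs2, rfl⟩ := hS
  intro x hx y hy
  have hxS : (s1+s2)*x*(s1+s2) = s1*x*s1 + (s1*x*s2 + (s2*x*s1 + s2*x*s2)) := by noncomm_ring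
  rw [hxS, d12 E F hL3 s1 hs1 x hx s2 hs2, d21 E F hL3 s2 hs2 x hx s1 hs1,
    d22 E F hL3 s2 hs2 x hx s2 hs2, add_zero, add_zero, add_zero]
  have hd : s1*x*s1 ∈ D2sub E F := d11 E F hL3 s1 hs1 x hx s1 hs1
  have : s1*x*s1*y*(s1+s2) = s1*x*s1*y*s1 + s1*x*s1*y*s2 := by noncomm_ring
  rw [this, d21 E F hL3 _ hd y hy s1 hs1, d22 E F hL3 _ hd y hy s2 hs2, add_zero]
end
end Words

section Powers
variable {R : Type*} [Ring R] (W S : R)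

def AGn (n : ℕ) : AddSubgroup R :=
  AddSubgroup.closure {z | ∃ i j, i + j = n ∧ z = W^i*S*W^j}

def BGn (n : ℕ) : AddSubgroup R :=
  AddSubgroup.closure {z | ∃ i j l, i + j + l = n ∧ z = W^i*S*W^j*S*W^l}

lemma AG_mul_W {n : ℕ} : ∀ a ∈ AGn W S n, a*W ∈ AGn W S (n+1) := by
  intro a ha
  induction ha using AddSubgroup.closure_induction with
  | mem a' ha' =>
    obtain ⟨i, j, hij, rfl⟩ := ha'
    exact AddSubgroup.subset_closure ⟨i, j+1, by omega, by rw [pow_succ]; noncomm_ring⟩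
  | zero => rw [zero_mul]; exact zero_mem _
  | add u v hu hv ihu ihv => rw [add_mul]; exact add_mem ihu ihv
  | neg u hu ihu => rw [neg_mul]; exact neg_mem ihu

lemma AG_mul_S {n : ℕ} : ∀ a ∈ AGn W S n, a*S ∈ BGn W S n := by
  intro a ha
  induction ha using AddSubgroup.closure_induction with
  | mem a' ha' =>
    obtain ⟨i, j, hij, rfl⟩ := ha'
    exact AddSubgroup.subset_closure ⟨i, j, 0, by omega, by rw [pow_zero, mul_one]⟩
  | zero => rw [zero_mul]; exact zero_mem _
  | add u v hu hv ihu ihv => rw [add_mul]; exact add_mem ihu ihv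
  | neg u hu ihu => rw [neg_mul]; exact neg_mem ihu

lemma BG_mul_W {n : ℕ} : ∀ b ∈ BGn W S n, b*W ∈ BGn W S (n+1) := by
  intro b hb
  induction hb using AddSubgroup.closure_induction with
  | mem b' hb' =>
    obtain ⟨i, j, l, hijl, rfl⟩ := hb'
    exact AddSubgroup.subset_closure ⟨i, j, l+1, by omega, by rw [pow_succ]; noncomm_ring⟩
  | zero => rw [zero_mul]; exact zero_mem _
  | add u v hu hv ihu ihv => rw [add_mul]; exact add_mem ihu ihv
  | neg u hu ihu => rw [neg_mul]; exact neg_mem ihu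

lemma BG_mul_S (hK2 : ∀ i j : ℕ, S*W^i*S*W^j*S = 0) {n : ℕ} :
    ∀ b ∈ BGn W S n, b*S = 0 := by
  intro b hb
  induction hb using AddSubgroup.closure_induction with
  | mem b' hb' =>
    obtain ⟨i, j, l, hijl, rfl⟩ := hb'
    calc W^i*S*W^j*S*W^l*S = W^i*(S*W^j*S*W^l*S) := by noncomm_ring
      _ = 0 := by rw [hK2 j l, mul_zero]
  | zero => rw [zero_mul]
  | add u v hu hv ihu ihv => rw [add_mul, ihu, ihv, add_zero]
  | neg u hu ihu => rw [neg_mul, ihu, neg_zero]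

lemma main_pow (hK2 : ∀ i j : ℕ, S*W^i*S*W^j*S = 0) :
    ∀ k : ℕ, ∃ x ∈ AGn W S (k+1), ∃ y ∈ BGn W S k, (W+S)^(k+2) = W^(k+2) + x + y := by
  intro k
  induction k with
  | zero =>
    refine ⟨W*S + S*W, ?_, S*S, ?_, ?_⟩
    · refine add_mem (AddSubgroup.subset_closure ⟨1, 0, by omega, by simp⟩)
        (AddSubgroup.subset_closure ⟨0, 1, by omega, by simp⟩)
    · exact AddSubgroup.subset_closure ⟨0, 0, 0, by omega, by simp⟩
    · rw [pow_two, pow_two]; noncomm_ring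
  | succ k ih =>
    obtain ⟨x, hx, y, hy, hpow⟩ := ih
    refine ⟨W^(k+2)*S + x*W, ?_, x*S + y*W, ?_, ?_⟩
    · exact add_mem (AddSubgroup.subset_closure ⟨k+2, 0, by omega, by rw [pow_zero, mul_one]⟩)
        (AG_mul_W W S x hx)
    · exact add_mem (AG_mul_S W S x hx) (BG_mul_W W S y hy)
    · rw [pow_succ, hpow]
      have hyS := BG_mul_S W S hK2 y hy
      calc (W^(k+2)+x+y)*(W+S)
          = W^(k+2)*W + (W^(k+2)*S + x*W) + (x*S + y*W) + y*S := by noncomm_ring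
        _ = W^(k+1+2) + (W^(k+2)*S + x*W) + (x*S + y*W) := by
            rw [hyS, add_zero, ← pow_succ]

lemma AG_zero {n : ℕ} (h : ∀ i j : ℕ, i + j = n → W^i*S*W^j = 0) :
    ∀ a ∈ AGn W S n, a = 0 := by
  intro a ha
  induction ha using AddSubgroup.closure_induction with
  | mem a' ha' => obtain ⟨i, j, hij, rfl⟩ := ha'; exact h i j hij
  | zero => rfl
  | add u v hu hv ihu ihv => rw [ihu, ihv, add_zero]
  | neg u hu ihu => rw [ihu, neg_zero]

lemma BG_zero {n : ℕ} (h : ∀ i j l : ℕ, i + j + l = n → W^i*S*W^j*S*W^l = 0) :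
    ∀ b ∈ BGn W S n, b = 0 := by
  intro b hb
  induction hb using AddSubgroup.closure_induction with
  | mem b' hb' => obtain ⟨i, j, l, hijl, rfl⟩ := hb'; exact h i j l hijl
  | zero => rfl
  | add u v hu hv ihu ihv => rw [ihu, ihv, add_zero]
  | neg u hu ihu => rw [ihu, neg_zero]

lemma nilpotent_sum (hW : IsNilpotent W) (hK2 : ∀ i j : ℕ, S*W^i*S*W^j*S = 0) :
    IsNilpotent (W + S) := by
  obtain ⟨w0, hw0⟩ := hW
  set w := w0 + 1 with hwdef
  have hw : W^w = 0 := by rw [hwdef, pow_succ, hw0, zero_mul]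
  have hwpow : ∀ m : ℕ, w ≤ m → W^m = 0 := fun m hm => pow_eq_zero_of_le hm hw
  obtain ⟨x, hx, y, hy, hpow⟩ := main_pow W S hK2 (3*w - 2)
  have h32 : 3*w - 2 + 2 = 3*w := by omega
  have hxz : x = 0 := by
    refine AG_zero W S (fun i j hij => ?_) x hx
    rcases le_or_gt w i with h | h
    · rw [hwpow i h, zero_mul, zero_mul]
    · have : w ≤ j := by omega
      rw [hwpow j this, mul_zero]
  have hyz : y = 0 := by
    refine BG_zero W S (fun i j l hijl => ?_) y hy
    rcases le_or_gt w i with h | h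
    · rw [hwpow i h, zero_mul, zero_mul, zero_mul, zero_mul]
    · rcases le_or_gt w j with h' | h'
      · rw [hwpow j h']
        rw [mul_zero, zero_mul, zero_mul]
      · have : w ≤ l := by omega
        rw [hwpow l this, mul_zero]
  refine ⟨3*w, ?_⟩
  rw [← h32, hpow, hxz, hyz, add_zero, add_zero, h32]
  exact hwpow _ (by omega)
end Powers


theorem hirano_perturb_thm210' {L : Type*} [Ring L] (A B C D AD DD : L)
    (hADc : A * AD = AD * A) (hADz : AD = AD * A * AD) (hADn : IsNilpotent (A - A * AD))
    (hDc : D * DD = DD * D) (hDz : DD = DD * D * DD) (hDn : IsNilpotent (D - D * DD))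
    (h1 : AD * B * C * AD = 0)
    (h2 : AD * B * D = 0)
    (h3 : (1 - A * AD) * B * C = 0)
    (h4 : (1 - A * AD) * B * D = 0) :
    IsNilpotent ((!![A, B; C, D] : Matrix (Fin 2) (Fin 2) L)
      - (!![A, B; C, D] : Matrix (Fin 2) (Fin 2) L)^3) := by
  have hAe : A*(A*AD) = (A*AD)*A := by rw [mul_assoc, ← hADc]
  have hBD : B*D = 0 := by
    have e1 : (A*AD)*(B*D) = 0 := by
      have ee : (A*AD)*(B*D) = A*(AD*B*D) := by noncomm_ring
      rw [ee, h2, mul_zero]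
    have e2 : B*D = (1 - A*AD)*B*D + (A*AD)*(B*D) := by noncomm_ring
    rw [e2, h4, e1, add_zero]
  have heBC : (A*AD)*(B*C) = B*C := by
    have ee : (1-A*AD)*B*C = B*C - (A*AD)*(B*C) := by noncomm_ring
    rw [ee] at h3
    exact (sub_eq_zero.mp h3).symm
  have hBCAD : B*C*AD = 0 := by
    calc B*C*AD = (A*AD)*(B*C)*AD := by rw [heBC]
      _ = A*(AD*B*C*AD) := by noncomm_ring
      _ = 0 := by rw [h1, mul_zero]
  have hBCe : B*C*(A*AD) = 0 := by
    rw [hADc, ← mul_assoc, hBCAD, zero_mul]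
  have hAnil := sub_sq_nil A AD hADc hADz hADn
  have hDnil := sub_sq_nil D DD hDc hDz hDn
  set Em : Matrix (Fin 2) (Fin 2) L := !![A,0;C,D] with hEm
  set Fm : Matrix (Fin 2) (Fin 2) L := !![0,B;0,0] with hFm
  set M : Matrix (Fin 2) (Fin 2) L := !![A,B;C,D] with hM
  have hMEF : M = Em + Fm := by
    rw [hM, hEm, hFm]; ext i j; fin_cases i <;> fin_cases j <;> simp
  have hEsub : Em - Em*Em = !![A - A*A, 0; C - (C*A + D*C), D - D*D] := by
    rw [hEm, Matrix.mul_fin_two]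
    ext i j; fin_cases i <;> fin_cases j <;> simp
  have hEsq_nil : IsNilpotent (Em - Em*Em) := by
    rw [hEsub]; exact nilpotent_lower_tri _ _ _ hAnil hDnil
  have hWnil : IsNilpotent (Em - Em^3) := by
    have hfac : Em - Em^3 = (Em - Em*Em)*(1+Em) := by noncomm_ring
    have hcomm : Commute (Em - Em*Em) (1+Em) := by
      show (Em - Em*Em)*(1+Em) = (1+Em)*(Em - Em*Em)
      noncomm_ring
    rw [hfac]; exact hcomm.isNilpotent_mul_right hEsq_nil
  have hFF : Fm * Fm = 0 := by
    rw [hFm, Matrix.mul_fin_two]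
    ext i j; fin_cases i <;> fin_cases j <;> simp
  set W : Matrix (Fin 2) (Fin 2) L := Em - Em^3 with hW
  set S : Matrix (Fin 2) (Fin 2) L :=
    Fm - Em*Em*Fm - Em*Fm*Em - Fm*(Em*Em) - Fm*Em*Fm with hS
  have hMS : M - M^3 = W + S := by
    rw [hMEF, hW, hS]
    have hexp : (Em+Fm)^3 = Em*Em*Em + Em*Em*Fm + Em*Fm*Em + Em*(Fm*Fm)
        + Fm*(Em*Em) + Fm*Em*Fm + (Fm*Fm)*Em + (Fm*Fm)*Fm := by noncomm_ring
    rw [hexp, hFF]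
    noncomm_ring
  have hL3 : ∀ x ∈ Subring.closure {Em}, ∀ y ∈ Subring.closure {Em},
      Fm*x*Fm*y*Fm = 0 := by
    rw [hEm, hFm]
    exact L3lemma A B C D AD hBD hBCe heBC hAe
  have hEC : Em ∈ Subring.closure {Em} := Subring.subset_closure rfl
  have hWC : W ∈ Subring.closure {Em} := by
    rw [hW]; exact sub_mem hEC (pow_mem hEC 3)
  have hSdec : ∃ s1 ∈ D1sub Em Fm, ∃ s2 ∈ D2sub Em Fm, S = s1 + s2 := by
    refine ⟨Fm - Em*Em*Fm - Em*Fm*Em - Fm*(Em*Em), ?_, -(Fm*Em*Fm), ?_, by rw [hS]; noncomm_ring⟩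
    · refine sub_mem (sub_mem (sub_mem ?_ ?_) ?_) ?_
      · exact AddSubgroup.subset_closure ⟨1, one_mem _, 1, one_mem _, by rw [one_mul, mul_one]⟩
      · exact AddSubgroup.subset_closure ⟨Em*Em, mul_mem hEC hEC, 1, one_mem _, by rw [mul_one]⟩
      · exact AddSubgroup.subset_closure ⟨Em, hEC, Em, hEC, rfl⟩
      · exact AddSubgroup.subset_closure ⟨1, one_mem _, Em*Em, mul_mem hEC hEC, by rw [one_mul]⟩
    · refine neg_mem (AddSubgroup.subset_closure ⟨1, one_mem _, Em, hEC, 1, one_mem _, ?_⟩)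
      rw [one_mul, mul_one]
  have hK2 : ∀ i j : ℕ, S*W^i*S*W^j*S = 0 := fun i j =>
    K2lemma Em Fm hL3 S hSdec (W^i) (pow_mem hWC i) (W^j) (pow_mem hWC j)
  rw [hMS]
  exact nilpotent_sum W S hWnil hK2


variable {X : Type*} [NormedAddCommGroup X] [NormedSpace ℂ X] [CompleteSpace X]

theorem hirano_perturb_thm210 (A B C D AD : X →L[ℂ] X)
    (hAD : A * AD = AD * A ∧ AD = AD * A * AD ∧ IsNilpotent (A - A * AD))
    (hD : HasStronglyDrazinInverse D)
    (h1 : AD * B * C * AD = 0)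
    (h2 : AD * B * D = 0)
    (h3 : (1 - A * AD) * B * C = 0)
    (h4 : (1 - A * AD) * B * D = 0) :
    HasHiranoInverse (!![A, B; C, D] : Matrix (Fin 2) (Fin 2) (X →L[ℂ] X)) := by
  obtain ⟨hADc, hADz, hADn⟩ := hAD
  obtain ⟨DD, hDc, hDz, hDn⟩ := hD
  exact hirano_of_nilpotent _
    (hirano_perturb_thm210' A B C D AD DD hADc hADz hADn hDc hDz hDn h1 h2 h3 h4)
end

section
/- Let X be a complex Banach space and L(X) the Banach algebra of bounded linear operators on X. Let M = [[A, B], [C, D]] ∈ M₂(L(X)) and suppose A and D have strongly Drazin inverses. If D^D C B D^D = 0, D^D C A = 0, D^π C B = 0 and D^π C A = 0, where D^D is the Drazin inverse of D and D^π = I − D·D^D, then M has a Hirano inverse in M₂(L(X)). -/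
section General
variable {R : Type*} [Ring R]

private lemma expand_pow (x y : R) (hy : ∀ k, y * x ^ k * y = 0) (m : ℕ) :
    (x + y) ^ (m + 1) = x ^ (m + 1) + ∑ i ∈ Finset.range (m + 1), x ^ i * y * x ^ (m - i) := by
  induction m with
  | zero => simp
  | succ m ih =>
    have hyS : y * (∑ i ∈ Finset.range (m + 1), x ^ i * y * x ^ (m - i)) = 0 := by
      rw [Finset.mul_sum]
      refine Finset.sum_eq_zero fun i _ => ?_
      rw [← mul_assoc, ← mul_assoc, hy i, zero_mul]
    rw [pow_succ' (x + y) (m + 1), ih, mul_add, add_mul, add_mul, hyS, add_zero,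
      Finset.mul_sum]
    have hS : ∑ i ∈ Finset.range (m + 1), x * (x ^ i * y * x ^ (m - i)) =
        ∑ i ∈ Finset.range (m + 1), x ^ (i + 1) * y * x ^ (m - i) :=
      Finset.sum_congr rfl fun i _ => by rw [← mul_assoc, ← mul_assoc, ← pow_succ']
    have hsum : ∑ i ∈ Finset.range (m + 2), x ^ i * y * x ^ (m + 1 - i) =
        y * x ^ (m + 1) + ∑ i ∈ Finset.range (m + 1), x ^ (i + 1) * y * x ^ (m - i) := by
      rw [Finset.sum_range_succ']
      simp only [Nat.succ_sub_succ_eq_sub, pow_zero, one_mul, Nat.sub_zero]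
      abel
    rw [hS, ← pow_succ', hsum]
    abel

private lemma nilp_add (x y : R) (hx : IsNilpotent x) (hy : ∀ k, y * x ^ k * y = 0) :
    IsNilpotent (x + y) := by
  obtain ⟨p, hp⟩ := hx
  refine ⟨2 * p + 1, ?_⟩
  rw [expand_pow x y hy (2 * p)]
  have h1 : x ^ (2 * p + 1) = 0 := by
    rw [show 2 * p + 1 = p + (p + 1) by ring, pow_add, hp, zero_mul]
  rw [h1, zero_add]
  refine Finset.sum_eq_zero fun i hi => ?_
  rcases le_or_gt p i with h | h
  · have : x ^ i = 0 := by rw [show i = p + (i - p) by omega, pow_add, hp, zero_mul]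
    rw [this, zero_mul, zero_mul]
  · have : x ^ (2 * p - i) = 0 := by
      rw [show 2 * p - i = p + (p - i) by omega, pow_add, hp, zero_mul]
    rw [this, mul_zero]

private lemma hirano_pert (a g : R) (ha : IsNilpotent (a - a ^ 3))
    (hg : ∀ k, g * a ^ k * g = 0) : IsNilpotent ((a + g) - (a + g) ^ 3) := by
  set x := a - a ^ 3 with hx
  have key : ∀ k j i, g * a ^ j * x ^ k * (a ^ i * g) = 0 := by
    intro k
    induction k with
    | zero =>
      intro j i
      simp only [pow_zero, mul_one]
      rw [← mul_assoc, mul_assoc g, ← pow_add]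
      exact hg (j + i)
    | succ k ih =>
      intro j i
      have hxa : x * (a ^ i * g) = a ^ (i + 1) * g - a ^ (3 + i) * g := by
        rw [hx, sub_mul, ← mul_assoc, ← mul_assoc, ← pow_succ', ← pow_add]
      rw [pow_succ, ← mul_assoc (g * a ^ j) (x ^ k) x, mul_assoc _ x (a ^ i * g), hxa,
        mul_sub, ih, ih, sub_zero]
  have keyR : ∀ k j i (w : R), g * a ^ j * x ^ k * (a ^ i * (g * w)) = 0 := by
    intro k j i w
    have h := key k j i
    rw [← mul_assoc] at h
    rw [← mul_assoc, ← mul_assoc, h, zero_mul]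
  -- right-assoc instances
  have s1 : ∀ k, g * (x ^ k * g) = 0 := fun k => by
    simpa [mul_assoc] using key k 0 0
  have s2 : ∀ k, g * (x ^ k * (a ^ 2 * g)) = 0 := fun k => by
    simpa [mul_assoc] using key k 0 2
  have s3 : ∀ k, g * (x ^ k * (a * (g * a))) = 0 := fun k => by
    simpa [mul_assoc, pow_one] using keyR k 0 1 a
  have s4 : ∀ k, g * (x ^ k * (g * a ^ 2)) = 0 := fun k => by
    simpa [mul_assoc] using keyR k 0 0 (a ^ 2)
  have s5 : ∀ k, g * (a * (x ^ k * g)) = 0 := fun k => by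
    simpa [mul_assoc, pow_one] using key k 1 0
  have s6 : ∀ k, g * (a * (x ^ k * (a ^ 2 * g))) = 0 := fun k => by
    simpa [mul_assoc, pow_one] using key k 1 2
  have s7 : ∀ k, g * (a * (x ^ k * (a * (g * a)))) = 0 := fun k => by
    simpa [mul_assoc, pow_one] using keyR k 1 1 a
  have s8 : ∀ k, g * (a * (x ^ k * (g * a ^ 2))) = 0 := fun k => by
    simpa [mul_assoc, pow_one] using keyR k 1 0 (a ^ 2)
  have s9 : ∀ k, g * (a ^ 2 * (x ^ k * g)) = 0 := fun k => by
    simpa [mul_assoc] using key k 2 0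
  have s10 : ∀ k, g * (a ^ 2 * (x ^ k * (a ^ 2 * g))) = 0 := fun k => by
    simpa [mul_assoc] using key k 2 2
  have s11 : ∀ k, g * (a ^ 2 * (x ^ k * (a * (g * a)))) = 0 := fun k => by
    simpa [mul_assoc, pow_one] using keyR k 2 1 a
  have s12 : ∀ k, g * (a ^ 2 * (x ^ k * (g * a ^ 2))) = 0 := fun k => by
    simpa [mul_assoc] using keyR k 2 0 (a ^ 2)
  have hgg : g * g = 0 := by simpa using hg 0
  have hgag : g * a * g = 0 := by simpa using hg 1
  have cube : (a + g) ^ 3 = a ^ 3 + a ^ 2 * g + a * g * a + g * a ^ 2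
      + (a * (g * g) + g * a * g + g * g * a + g * g * g) := by noncomm_ring
  simp only [hgg, hgag, mul_zero, zero_mul, add_zero] at cube
  have main : (a + g) - (a + g) ^ 3 = x + (g - a ^ 2 * g - a * g * a - g * a ^ 2) := by
    rw [cube, hx]; abel
  rw [main]
  refine nilp_add _ _ ha fun k => ?_
  simp only [sub_mul, mul_sub, mul_assoc, s1, s2, s3, s4, s5, s6, s7, s8, s9, s10, s11, s12,
    mul_zero, zero_mul, sub_zero, zero_sub, neg_zero, sub_self]

private lemma sd_nil3 (a z : R) (h1 : a * z = z * a) (h2 : z = z * a * z)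
    (h3 : IsNilpotent (a - a * z)) : IsNilpotent (a - a ^ 3) := by
  set e := a * z with he_def
  have he : e * e = e := by rw [he_def, mul_assoc, ← mul_assoc z a z, ← h2]
  have hea : a * e = e * a := by rw [he_def, mul_assoc, ← h1]
  have key : a - a ^ 2 = (a - e) * (1 - e - a) := by
    have expand : (a - e) * (1 - e - a) = a - a * e - a * a - e + e * e + e * a := by
      noncomm_ring
    rw [expand, he, ← hea, ← pow_two]
    abel
  have c1 : Commute a e := hea
  have hcomm : Commute (a - e) (1 - e - a) :=
    (((Commute.one_right (a - e)).sub_right (Commute.sub_left c1 (Commute.refl e))).sub_right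
      (Commute.sub_left (Commute.refl a) c1.symm))
  have n2 : IsNilpotent (a - a ^ 2) := key ▸ hcomm.isNilpotent_mul_right h3
  have key2 : a - a ^ 3 = (a - a ^ 2) * (1 + a) := by noncomm_ring
  have hcomm2 : Commute (a - a ^ 2) (1 + a) :=
    (Commute.one_right _).add_right
      (Commute.sub_left (Commute.refl a) ((Commute.refl a).pow_left 2))
  exact key2 ▸ hcomm2.isNilpotent_mul_right n2

private lemma conj_nilp (u v w : R) (huv : u * v = 1) (hw : IsNilpotent w) :
    IsNilpotent (v * w * u) := by
  obtain ⟨k, hk⟩ := hw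
  have key : ∀ m, (v * w * u) ^ (m + 1) = v * w ^ (m + 1) * u := by
    intro m
    induction m with
    | zero => simp
    | succ m ih =>
      rw [pow_succ (v * w * u), ih]
      calc v * w ^ (m + 1) * u * (v * w * u) = v * w ^ (m + 1) * ((u * v) * (w * u)) := by
            simp only [mul_assoc]
      _ = v * (w ^ (m + 1) * w) * u := by rw [huv, one_mul]; simp only [mul_assoc]
      _ = v * w ^ (m + 1 + 1) * u := by rw [← pow_succ]
  refine ⟨k + 1, ?_⟩
  rw [key k, pow_succ, hk, zero_mul, mul_zero, zero_mul]

private lemma diag_pow_s11 (x w : R) (k : ℕ) :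
    (!![x, 0; 0, w] : Matrix (Fin 2) (Fin 2) R) ^ k = !![x ^ k, 0; 0, w ^ k] := by
  induction k with
  | zero => simp [Matrix.one_fin_two]
  | succ k ih => rw [pow_succ, ih, Matrix.mul_fin_two, pow_succ, pow_succ]; simp

private lemma tri_hirano_nil (a b d : R) (ha : IsNilpotent (a - a ^ 3))
    (hd : IsNilpotent (d - d ^ 3)) :
    IsNilpotent ((!![a, b; 0, d] : Matrix (Fin 2) (Fin 2) R)
      - (!![a, b; 0, d] : Matrix (Fin 2) (Fin 2) R) ^ 3) := by
  set β := b - (a * a * b + (a * b + b * d) * d) with hβ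
  have hsplit : (!![a, b; 0, d] : Matrix (Fin 2) (Fin 2) R) - (!![a, b; 0, d]) ^ 3 =
      !![a - a ^ 3, 0; 0, d - d ^ 3] + !![0, β; 0, 0] := by
    rw [pow_succ, pow_succ, pow_one, Matrix.mul_fin_two, Matrix.mul_fin_two]
    ext i j
    fin_cases i <;> fin_cases j <;>
      simp [hβ] <;> noncomm_ring
  rw [hsplit]
  refine nilp_add _ _ ?_ ?_
  · obtain ⟨p, hp⟩ := ha
    obtain ⟨q, hq⟩ := hd
    refine ⟨p + q, ?_⟩
    rw [diag_pow_s11]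
    have h1 : (a - a ^ 3) ^ (p + q) = 0 := by rw [pow_add, hp, zero_mul]
    have h2 : (d - d ^ 3) ^ (p + q) = 0 := by rw [pow_add, hq, mul_zero]
    rw [h1, h2]
    ext i j
    fin_cases i <;> fin_cases j <;> simp
  · intro k
    rw [diag_pow_s11, Matrix.mul_fin_two, Matrix.mul_fin_two]
    ext i j
    fin_cases i <;> fin_cases j <;> simp

private lemma nil3_hirano (a : R) (h : IsNilpotent (a - a ^ 3)) : HasHiranoInverse a := by
  obtain ⟨n0, hn0⟩ := h
  have hn : (a - a ^ 3) ^ (n0 + 1) = 0 := by rw [pow_succ, hn0, zero_mul]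
  set n := n0 + 1 with hn_def
  set T := a ^ 2 - a ^ 4 with hT
  have hTa : Commute a T := ((Commute.refl a).pow_right 2).sub_right ((Commute.refl a).pow_right 4)
  have hTn : T ^ n = 0 := by
    have hfac : T = a * (a - a ^ 3) := by rw [hT]; noncomm_ring
    have hc : Commute a (a - a ^ 3) := (Commute.refl a).sub_right ((Commute.refl a).pow_right 3)
    rw [hfac, hc.mul_pow, hn, mul_zero]
  let e : ℕ → R := fun i => Nat.rec (a ^ 2) (fun _ x => 3 * x ^ 2 - 2 * x ^ 3) i
  have he0 : e 0 = a ^ 2 := rfl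
  have heS : ∀ i, e (i + 1) = 3 * (e i) ^ 2 - 2 * (e i) ^ 3 := fun i => rfl
  have hce : ∀ i, Commute a (e i) := by
    intro i
    induction i with
    | zero => exact (Commute.refl a).pow_right 2
    | succ i ih =>
      rw [heS]
      exact ((Commute.ofNat_right a 3).mul_right (ih.pow_right 2)).sub_right
        ((Commute.ofNat_right a 2).mul_right (ih.pow_right 3))
  have hti : ∀ i, ∃ c, Commute a c ∧ e i - (e i) ^ 2 = T ^ (2 ^ i) * c := by
    intro i
    induction i with
    | zero =>
      refine ⟨1, Commute.one_right a, ?_⟩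
      rw [he0, pow_zero, pow_one, mul_one, hT]
      noncomm_ring
    | succ i ih =>
      obtain ⟨c, hac, hc⟩ := ih
      have idt : e (i + 1) - (e (i + 1)) ^ 2 =
          (e i - (e i) ^ 2) ^ 2 * (3 + 4 * e i - 4 * (e i) ^ 2) := by
        rw [heS]; noncomm_ring
      have hTc : Commute (T ^ (2 ^ i)) c :=
        (((hac.pow_left 2).sub_left (hac.pow_left 4)).pow_left _)
      set w := 3 + 4 * e i - 4 * (e i) ^ 2 with hw
      have haw : Commute a w :=
        ((Commute.ofNat_right a 3).add_right
          ((Commute.ofNat_right a 4).mul_right (hce i))).sub_right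
          ((Commute.ofNat_right a 4).mul_right ((hce i).pow_right 2))
      refine ⟨c * c * w, (hac.mul_right hac).mul_right haw, ?_⟩
      rw [idt, hc]
      calc (T ^ 2 ^ i * c) ^ 2 * w = T ^ 2 ^ i * (c * T ^ 2 ^ i) * (c * w) := by
            rw [pow_two]; simp only [mul_assoc]
      _ = T ^ 2 ^ i * (T ^ 2 ^ i * c) * (c * w) := by rw [hTc.eq]
      _ = (T ^ 2 ^ i * T ^ 2 ^ i) * (c * c * w) := by simp only [mul_assoc]
      _ = T ^ 2 ^ (i + 1) * (c * c * w) := by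
            rw [← pow_add, ← two_mul, ← pow_succ']
  have hTnil : IsNilpotent T := ⟨n, hTn⟩
  have htnil : ∀ i, IsNilpotent (e i - (e i) ^ 2) := by
    intro i
    obtain ⟨c, hac, hc⟩ := hti i
    rw [hc]
    have hTc : Commute (T ^ (2 ^ i)) c :=
      (((hac.pow_left 2).sub_left (hac.pow_left 4)).pow_left _)
    have hpnil : IsNilpotent (T ^ (2 ^ i)) := by
      refine ⟨n, ?_⟩
      have hle : n ≤ 2 ^ i * n := Nat.le_mul_of_pos_left n (by positivity)
      rw [← pow_mul, show 2 ^ i * n = n + (2 ^ i * n - n) from (Nat.add_sub_cancel' hle).symm,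
        pow_add, hTn, zero_mul]
    exact hTc.isNilpotent_mul_right hpnil
  have hnili : ∀ i, IsNilpotent (a ^ 2 - e i) := by
    intro i
    induction i with
    | zero => rw [he0, sub_self]; exact ⟨1, by simp⟩
    | succ i ih =>
      have hdecomp : a ^ 2 - e (i + 1) = (a ^ 2 - e i) + (e i - (e i) ^ 2) * (1 - 2 * e i) := by
        rw [heS]; noncomm_ring
      rw [hdecomp]
      have hcomm1 : Commute (e i) (e i - (e i) ^ 2) :=
        (Commute.refl _).sub_right ((Commute.refl _).pow_right 2)
      have hc2 : Commute (e i - (e i) ^ 2) (1 - 2 * e i) :=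
        (Commute.one_right _).sub_right
          ((Commute.ofNat_right _ 2).mul_right hcomm1.symm)
      have hnil2 : IsNilpotent ((e i - (e i) ^ 2) * (1 - 2 * e i)) :=
        hc2.isNilpotent_mul_right (htnil i)
      have hcomm3 : Commute (a ^ 2 - e i) ((e i - (e i) ^ 2) * (1 - 2 * e i)) := by
        have b1 : Commute (a ^ 2 - e i) (e i) :=
          ((hce i).pow_left 2).sub_left (Commute.refl _)
        exact (b1.sub_right (b1.pow_right 2)).mul_right
          ((Commute.one_right _).sub_right ((Commute.ofNat_right _ 2).mul_right b1))
      exact hcomm3.isNilpotent_add ih hnil2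
  -- the idempotent
  have hm : n ≤ 2 ^ n := (Nat.lt_two_pow_self (n := n)).le
  obtain ⟨c, hac, hc⟩ := hti n
  have hem : e n - (e n) ^ 2 = 0 := by
    rw [hc, show (2:ℕ) ^ n = n + (2 ^ n - n) by omega, pow_add, hTn, zero_mul, zero_mul]
  set E := e n with hE
  have hidem : E * E = E := by
    have h' := sub_eq_zero.mp hem
    rw [pow_two] at h'
    exact h'.symm
  obtain ⟨K, hK⟩ := hnili n
  set ν := a ^ 2 - E with hν
  have hcaE : Commute a E := hce n
  have hcaν : Commute a ν := ((Commute.refl a).pow_right 2).sub_right hcaE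
  have hcEν : Commute E ν := ((hcaE.symm).pow_right 2).sub_right (Commute.refl E)
  set s := ∑ i ∈ Finset.range K, (-ν) ^ i with hs_def
  have hνK : (-ν) ^ K = 0 := by rw [neg_pow, hK, mul_zero]
  have hs1 : s * (1 + ν) = 1 := by
    have hgeom := geom_sum_mul (-ν) K
    rw [hνK, zero_sub] at hgeom
    have e2 : s * (-ν - 1) = -(s * (1 + ν)) := by noncomm_ring
    rw [hs_def] at e2 ⊢
    have : -(( ∑ i ∈ Finset.range K, (-ν) ^ i) * (1 + ν)) = -1 := by rw [← e2, hgeom]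
    exact neg_injective this
  have hcas : Commute a s := Commute.sum_right _ _ _ fun i _ => (hcaν.neg_right).pow_right i
  have hcEs : Commute E s := Commute.sum_right _ _ _ fun i _ => (hcEν.neg_right).pow_right i
  have hcνs : Commute ν s := Commute.sum_right _ _ _ fun i _ =>
    ((Commute.refl ν).neg_right).pow_right i
  have ha2 : a ^ 2 = E + ν := by rw [hν]; abel
  have haz : a * (a * E * s) = E := by
    calc a * (a * E * s) = (a * a) * E * s := by simp only [mul_assoc]
    _ = (E + ν) * E * s := by rw [← pow_two, ha2]
    _ = (E * E + ν * E) * s := by rw [add_mul]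
    _ = (E * (1 + ν)) * s := by rw [hidem, ← hcEν.eq, mul_add, mul_one]
    _ = E * ((1 + ν) * s) := by rw [mul_assoc]
    _ = E := by
        rw [((Commute.one_left s).add_left hcνs).eq, hs1, mul_one]
  refine ⟨a * E * s, ?_, ?_, ?_⟩
  · exact (((Commute.refl a).mul_right hcaE).mul_right hcas).eq
  · have hzaz : a * E * s * a * (a * E * s) = a * E * s := by
      rw [show a * E * s * a = a * (a * E * s) from
        (((Commute.refl a).mul_right hcaE).mul_right hcas).eq.symm, haz,
        ← mul_assoc, ← mul_assoc, ← hcaE.eq, mul_assoc a E E, hidem]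
    exact hzaz.symm
  · rw [haz]
    exact ⟨K, hK⟩

private lemma left_ann (a h : R) (h1 : h * a = 0) (h2 : h * h = 0) (k : ℕ) :
    h * a ^ k * h = 0 := by
  cases k with
  | zero => simpa using h2
  | succ k => rw [pow_succ', ← mul_assoc, h1, zero_mul, zero_mul]

end General

variable {X : Type*} [NormedAddCommGroup X] [NormedSpace ℂ X] [CompleteSpace X]

theorem hirano_perturb_cor211 (A B C D DD : X →L[ℂ] X)
    (hA : HasStronglyDrazinInverse A)
    (hDD : D * DD = DD * D ∧ DD = DD * D * DD ∧ IsNilpotent (D - D * DD))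
    (h1 : DD * C * B * DD = 0)
    (h2 : DD * C * A = 0)
    (h3 : (1 - D * DD) * C * B = 0)
    (h4 : (1 - D * DD) * C * A = 0) :
    HasHiranoInverse (!![A, B; C, D] : Matrix (Fin 2) (Fin 2) (X →L[ℂ] X)) := by
  obtain ⟨ZA, ha1, ha2, ha3⟩ := hA
  obtain ⟨hd1, hd2, hd3⟩ := hDD
  have hA3 : IsNilpotent (A - A ^ 3) := sd_nil3 A ZA ha1 ha2 ha3
  have hD3 : IsNilpotent (D - D ^ 3) := sd_nil3 D DD hd1 hd2 hd3
  set H : X →L[ℂ] X := B * (DD * C) with hH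
  set G : X →L[ℂ] X := DD * C * B with hG
  set A1 : X →L[ℂ] X := A - H with hA1def
  set D1 : X →L[ℂ] X := D + G with hD1def
  set C1 : X →L[ℂ] X := (1 - D * DD) * C with hC1def
  -- basic consequences
  have hHA : H * A = 0 := by rw [hH, mul_assoc, h2, mul_zero]
  have hHH : H * H = 0 := by
    have inner : DD * C * (B * (DD * C)) = 0 := by
      rw [← mul_assoc, ← mul_assoc, h1, zero_mul]
    rw [hH, mul_assoc B (DD * C) (B * (DD * C)), inner, mul_zero]
  have hHk : ∀ k : ℕ, (-H) * A ^ k * (-H) = 0 := by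
    intro k
    simpa [neg_mul, mul_neg, neg_neg] using left_ann A H hHA hHH k
  have hA1nil : IsNilpotent (A1 - A1 ^ 3) := by
    have := hirano_pert A (-H) hA3 hHk
    rwa [← sub_eq_add_neg] at this
  have hGk : ∀ k : ℕ, G * D ^ k * G = 0 := by
    intro k
    have hcDk : D ^ k * DD = DD * D ^ k := ((Commute.pow_left hd1 k)).eq
    calc G * D ^ k * G = DD * C * B * (D ^ k * DD) * (C * B) := by
          rw [hG]; simp only [mul_assoc]
    _ = DD * C * B * (DD * D ^ k) * (C * B) := by rw [hcDk]
    _ = (DD * C * B * DD) * (D ^ k * (C * B)) := by simp only [mul_assoc]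
    _ = 0 := by rw [h1, zero_mul]
  have hD1nil : IsNilpotent (D1 - D1 ^ 3) := hirano_pert D G hD3 hGk
  have hC1B : C1 * B = 0 := h3
  have hC1A1 : C1 * A1 = 0 := by
    rw [hA1def, hH, mul_sub, ← mul_assoc, hC1def, h4, h3, zero_mul, sub_zero]
  -- matrices
  set T : Matrix (Fin 2) (Fin 2) (X →L[ℂ] X) := !![A1, B; 0, D1] with hTdef
  set N : Matrix (Fin 2) (Fin 2) (X →L[ℂ] X) := !![0, 0; C1, 0] with hNdef
  have hNT : N * T = 0 := by
    rw [hNdef, hTdef, Matrix.mul_fin_two]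
    ext i j
    fin_cases i <;> fin_cases j <;> simp [hC1A1, hC1B]
  have hNN : N * N = 0 := by
    rw [hNdef, Matrix.mul_fin_two]
    ext i j
    fin_cases i <;> fin_cases j <;> simp
  have hNk : ∀ k : ℕ, N * T ^ k * N = 0 := fun k => left_ann T N hNT hNN k
  have hTnil : IsNilpotent (T - T ^ 3) := tri_hirano_nil A1 B D1 hA1nil hD1nil
  have hM1nil : IsNilpotent ((T + N) - (T + N) ^ 3) := hirano_pert T N hTnil hNk
  -- conjugation
  set U : Matrix (Fin 2) (Fin 2) (X →L[ℂ] X) := !![1, 0; DD * C, 1] with hUdef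
  set U' : Matrix (Fin 2) (Fin 2) (X →L[ℂ] X) := !![1, 0; -(DD * C), 1] with hU'def
  have hUU' : U * U' = 1 := by
    rw [hUdef, hU'def, Matrix.mul_fin_two, Matrix.one_fin_two]
    ext i j
    fin_cases i <;> fin_cases j <;> simp
  have hU'U : U' * U = 1 := by
    rw [hUdef, hU'def, Matrix.mul_fin_two, Matrix.one_fin_two]
    ext i j
    fin_cases i <;> fin_cases j <;> simp
  have hTN : T + N = !![A1, B; C1, D1] := by
    rw [hTdef, hNdef]
    ext i j : 2
    fin_cases i <;> fin_cases j <;> simp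
  have hconj : U * !![A, B; C, D] * U' = T + N := by
    rw [hTN, hUdef, hU'def, Matrix.mul_fin_two, Matrix.mul_fin_two]
    rw [← Matrix.ext_iff]
    intro i j
    fin_cases i <;> fin_cases j <;>
      simp only [Matrix.of_apply, Matrix.cons_val', Matrix.cons_val_zero, Matrix.cons_val_one,
        Matrix.head_cons, Matrix.head_fin_const, Matrix.empty_val', Matrix.cons_val_fin_one,
        Fin.zero_eta, Fin.mk_one, Fin.isValue,
        one_mul, zero_mul, mul_one, mul_zero, add_zero, zero_add, mul_neg]
    · -- (0,0)
      rw [hA1def, hH, ← sub_eq_add_neg]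
    · -- (1,0)
      rw [hC1def, h2, zero_add, add_mul,
        show DD * C * B * (DD * C) = 0 from by rw [← mul_assoc, ← hG, h1, zero_mul],
        zero_add, sub_mul, one_mul, mul_assoc, ← sub_eq_add_neg]
    · -- (1,1)
      rw [hD1def, hG, add_comm]
  have hM : (!![A, B; C, D] : Matrix (Fin 2) (Fin 2) (X →L[ℂ] X)) = U' * (T + N) * U := by
    rw [← hconj]
    have step : U' * (U * !![A, B; C, D] * U') * U
        = (U' * U) * !![A, B; C, D] * (U' * U) := by simp only [mul_assoc]
    rw [step, hU'U, one_mul, mul_one]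
  have hMnil : IsNilpotent ((!![A, B; C, D] : Matrix (Fin 2) (Fin 2) (X →L[ℂ] X))
      - (!![A, B; C, D] : Matrix (Fin 2) (Fin 2) (X →L[ℂ] X)) ^ 3) := by
    have hUw : ∀ w : Matrix (Fin 2) (Fin 2) (X →L[ℂ] X), U * (U' * w) = w := fun w => by
      rw [← mul_assoc, hUU', one_mul]
    have hcube : (U' * (T + N) * U) ^ 3 = U' * (T + N) ^ 3 * U := by
      rw [pow_succ, pow_succ, pow_one, pow_succ, pow_succ, pow_one]
      simp only [mul_assoc, hUw]
    rw [hM, hcube, ← sub_mul, ← mul_sub]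
    exact conj_nilp U U' _ hUU' hM1nil
  exact nil3_hirano _ hMnil
end
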